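/- arXiv:1308.6772 — 11 statements merged into one kernel-verified Lean document; each statement's English description precedes it below -/
import Mathlib

section
/- For Fibonacci quaternions and all n, m ≥ 1: Q_n Q_m + Q_{n+1} Q_{m+1} = −(L_{n+m+2} + L_{n+m+6}) + 2 Q_{n+m+1}, where the Lucas numbers are regarded as real scalars in ℍ. -/
open Quaternion TrivSqZeroExt DualNumber

noncomputable section

set_option maxRecDepth 10000

/-- The n-th Fibonacci quaternion Q_n = F_n + i F_{n+1} + j F_{n+2} + k F_{n+3}. -/
def fibQ (n : ℕ) : ℍ[ℝ] :=
  ⟨Nat.fib n, Nat.fib (n+1), Nat.fib (n+2), Nat.fib (n+3)⟩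

/-- Lucas numbers: L_0 = 2, L_1 = 1. -/
def lucas : ℕ → ℕ
  | 0 => 2
  | 1 => 1
  | n + 2 => lucas n + lucas (n+1)

/-- The n-th Lucas quaternion K_n = L_n + i L_{n+1} + j L_{n+2} + k L_{n+3}. -/
def lucasQ (n : ℕ) : ℍ[ℝ] :=
  ⟨lucas n, lucas (n+1), lucas (n+2), lucas (n+3)⟩

/-- The n-th dual Fibonacci quaternion Q̃_n = Q_n + ε Q_{n+1}. -/
def dQ (n : ℕ) : DualNumber ℍ[ℝ] := inl (fibQ n) + inl (fibQ (n+1)) * ε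

/-- The n-th dual Lucas quaternion K̃_n = K_n + ε K_{n+1}. -/
def dK (n : ℕ) : DualNumber ℍ[ℝ] := inl (lucasQ n) + inl (lucasQ (n+1)) * ε

/-- Conjugate of the dual Fibonacci quaternion (componentwise quaternion conjugation). -/
def dQconj (n : ℕ) : DualNumber ℍ[ℝ] := inl (star (fibQ n)) + inl (star (fibQ (n+1))) * ε

/-- The dual Fibonacci number F̃_n = F_n + ε F_{n+1} as a scalar dual quaternion. -/
def dF (n : ℕ) : DualNumber ℍ[ℝ] :=
  inl ((Nat.fib n : ℝ) : ℍ[ℝ]) + inl ((Nat.fib (n+1) : ℝ) : ℍ[ℝ]) * ε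

/-- The dual Lucas number L̃_n = L_n + ε L_{n+1} as a scalar dual quaternion. -/
def dL (n : ℕ) : DualNumber ℍ[ℝ] :=
  inl ((lucas n : ℝ) : ℍ[ℝ]) + inl ((lucas (n+1) : ℝ) : ℍ[ℝ]) * ε

def qi : ℍ[ℝ] := ⟨0,1,0,0⟩
def qj : ℍ[ℝ] := ⟨0,0,1,0⟩
def qk : ℍ[ℝ] := ⟨0,0,0,1⟩

lemma lucasFib : ∀ k, lucas (k+1) = Nat.fib k + Nat.fib (k+2)
  | 0 => rfl
  | 1 => rfl
  | (k+2) => by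
    show lucas (k+1) + lucas (k+1+1) = Nat.fib (k+2) + Nat.fib (k+4)
    rw [lucasFib k, lucasFib (k+1), show k+1+2 = k+3 from rfl]
    have e1 : Nat.fib (k+4) = Nat.fib (k+2) + Nat.fib (k+3) := Nat.fib_add_two
    have e2 : Nat.fib (k+3) = Nat.fib (k+1) + Nat.fib (k+2) := Nat.fib_add_two
    have e3 : Nat.fib (k+2) = Nat.fib k + Nat.fib (k+1) := Nat.fib_add_two
    omega

lemma fibR (k : ℕ) : ((Nat.fib (k+2) : ℝ)) = Nat.fib k + Nat.fib (k+1) := by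
  exact_mod_cast congrArg (Nat.cast : ℕ → ℝ) (Nat.fib_add_two (n := k))

lemma fibAddR (p q : ℕ) :
    ((Nat.fib (p+q+1) : ℝ)) = Nat.fib p * Nat.fib q + Nat.fib (p+1) * Nat.fib (q+1) := by
  exact_mod_cast congrArg (Nat.cast : ℕ → ℝ) (Nat.fib_add p q)

lemma aux (a b : ℕ) :
    fibQ (a+1) * fibQ (b+1) + fibQ (a+2) * fibQ (b+2) =
      -(((lucas (a+b+4) : ℝ) : ℍ[ℝ]) + ((lucas (a+b+8) : ℝ) : ℍ[ℝ])) + 2 * fibQ (a+b+3) := by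
  have hL4 : ((lucas (a+b+4) : ℝ)) = Nat.fib (a+b+3) + Nat.fib (a+b+5) := by
    exact_mod_cast congrArg (Nat.cast : ℕ → ℝ) (lucasFib (a+b+3))
  have hL8 : ((lucas (a+b+8) : ℝ)) = Nat.fib (a+b+7) + Nat.fib (a+b+9) := by
    exact_mod_cast congrArg (Nat.cast : ℕ → ℝ) (lucasFib (a+b+7))
  have hs9 : ((Nat.fib (a+b+9) : ℝ)) = Nat.fib (a+b+7) + Nat.fib (a+b+8) := fibR (a+b+7)
  have hs8 : ((Nat.fib (a+b+8) : ℝ)) = Nat.fib (a+b+6) + Nat.fib (a+b+7) := fibR (a+b+6)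
  have hs7 : ((Nat.fib (a+b+7) : ℝ)) = Nat.fib (a+b+5) + Nat.fib (a+b+6) := fibR (a+b+5)
  have hs6 : ((Nat.fib (a+b+6) : ℝ)) = Nat.fib (a+b+4) + Nat.fib (a+b+5) := fibR (a+b+4)
  have hs5 : ((Nat.fib (a+b+5) : ℝ)) = Nat.fib (a+b+3) + Nat.fib (a+b+4) := fibR (a+b+3)
  have hs4 : ((Nat.fib (a+b+4) : ℝ)) =
      Nat.fib (a+2) * Nat.fib (b+1) + Nat.fib (a+3) * Nat.fib (b+2) := by
    have h := fibAddR (a+2) (b+1)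
    rw [show a+2+(b+1)+1 = a+b+4 by omega] at h
    exact h
  have hs3 : ((Nat.fib (a+b+3) : ℝ)) =
      Nat.fib (a+1) * Nat.fib (b+1) + Nat.fib (a+2) * Nat.fib (b+2) := by
    have h := fibAddR (a+1) (b+1)
    rw [show a+1+(b+1)+1 = a+b+3 by omega] at h
    exact h
  have ha5 : ((Nat.fib (a+5) : ℝ)) = Nat.fib (a+3) + Nat.fib (a+4) := fibR (a+3)
  have ha4 : ((Nat.fib (a+4) : ℝ)) = Nat.fib (a+2) + Nat.fib (a+3) := fibR (a+2)
  have ha3 : ((Nat.fib (a+3) : ℝ)) = Nat.fib (a+1) + Nat.fib (a+2) := fibR (a+1)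
  have hb5 : ((Nat.fib (b+5) : ℝ)) = Nat.fib (b+3) + Nat.fib (b+4) := fibR (b+3)
  have hb4 : ((Nat.fib (b+4) : ℝ)) = Nat.fib (b+2) + Nat.fib (b+3) := fibR (b+2)
  have hb3 : ((Nat.fib (b+3) : ℝ)) = Nat.fib (b+1) + Nat.fib (b+2) := fibR (b+1)
  rw [show (2 : ℍ[ℝ]) = ((2:ℝ) : ℍ[ℝ]) from rfl]
  ext <;>
  · simp only [Quaternion.re_mul, Quaternion.imI_mul, Quaternion.imJ_mul,
      Quaternion.imK_mul, Quaternion.re_add, Quaternion.imI_add, Quaternion.imJ_add,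
      Quaternion.imK_add, Quaternion.re_neg, Quaternion.imI_neg, Quaternion.imJ_neg,
      Quaternion.imK_neg, Quaternion.re_coe, Quaternion.imI_coe, Quaternion.imJ_coe,
      Quaternion.imK_coe]
    simp only [fibQ]
    simp only [show a+1+1 = a+2 by omega,
      show a+1+2 = a+3 by omega,
      show a+1+3 = a+4 by omega,
      show a+2+1 = a+3 by omega,
      show a+2+2 = a+4 by omega,
      show a+2+3 = a+5 by omega,
      show b+1+1 = b+2 by omega,
      show b+1+2 = b+3 by omega,
      show b+1+3 = b+4 by omega,
      show b+2+1 = b+3 by omega,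
      show b+2+2 = b+4 by omega,
      show b+2+3 = b+5 by omega,
      show a+b+3+1 = a+b+4 by omega,
      show a+b+3+2 = a+b+5 by omega,
      show a+b+3+3 = a+b+6 by omega]
    simp only [hL4, hL8, hs9, hs8, hs7, hs6, hs5, hs4, hs3, ha5, ha4, ha3, hb5, hb4, hb3]
    ring

theorem fib_quaternion_product_sum (n m : ℕ) (hn : 1 ≤ n) (hm : 1 ≤ m) :
    fibQ n * fibQ m + fibQ (n+1) * fibQ (m+1) =
      -(((lucas (n+m+2) : ℝ) : ℍ[ℝ]) + ((lucas (n+m+6) : ℝ) : ℍ[ℝ])) + 2 * fibQ (n+m+1) := by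
  obtain ⟨a, rfl⟩ := Nat.exists_eq_add_of_le hn
  obtain ⟨b, rfl⟩ := Nat.exists_eq_add_of_le hm
  rw [show 1+a = a+1 by omega, show 1+b = b+1 by omega,
    show a+1+1 = a+2 from rfl, show b+1+1 = b+2 from rfl,
    show a+1+(b+1)+2 = a+b+4 by omega, show a+1+(b+1)+6 = a+b+8 by omega,
    show a+1+(b+1)+1 = a+b+3 by omega]
  exact aux a b


end
end

section
/- For n ≥ 0, the norm of the dual Fibonacci quaternion satisfies Q̃_n · conj(Q̃_n) = F_{2n+1} + F_{2n+5} + 2ε(F_{2n+2} + F_{2n+6}), where conj conjugates each quaternion component. -/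
open Quaternion TrivSqZeroExt DualNumber

noncomputable section

theorem fib_aux (n : ℕ) :
    (Nat.fib (2*n+1) : ℝ) = Nat.fib n ^ 2 + Nat.fib (n+1) ^ 2 ∧
    (Nat.fib (2*n+5) : ℝ) = Nat.fib (n+2) ^ 2 + Nat.fib (n+3) ^ 2 ∧
    (Nat.fib (2*n+2) : ℝ) = Nat.fib n * Nat.fib (n+1) + Nat.fib (n+1) * Nat.fib (n+2) ∧
    (Nat.fib (2*n+6) : ℝ) = Nat.fib (n+2) * Nat.fib (n+3) + Nat.fib (n+3) * Nat.fib (n+4) := by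
  have h1 := Nat.fib_add n n
  have h2 := Nat.fib_add (n+2) (n+2)
  have h3 := Nat.fib_add n (n+1)
  have h4 := Nat.fib_add (n+2) (n+3)
  refine ⟨?_, ?_, ?_, ?_⟩
  · rw [show 2*n+1 = n+n+1 by ring, h1]; push_cast; ring
  · rw [show 2*n+5 = (n+2)+(n+2)+1 by ring, h2]; push_cast; ring
  · rw [show 2*n+2 = n+(n+1)+1 by ring, h3]; push_cast; ring
  · rw [show 2*n+6 = (n+2)+(n+3)+1 by ring, h4]; push_cast; ring

theorem dual_expand (a b c d : ℍ[ℝ]) :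
    (inl a + inl b * ε) * (inl c + inl d * ε) =
      inl (a * c) + inl (a * d + b * c) * ε := by
  refine TrivSqZeroExt.ext ?_ ?_ <;> simp

theorem dual_fib_quaternion_norm (n : ℕ) :
    dQ n * dQconj n =
      inl (((Nat.fib (2*n+1) : ℝ) + (Nat.fib (2*n+5) : ℝ) : ℍ[ℝ])) +
      inl ((2 * ((Nat.fib (2*n+2) : ℝ) + (Nat.fib (2*n+6) : ℝ)) : ℍ[ℝ])) * ε := by
  obtain ⟨h1, h2, h3, h4⟩ := fib_aux n
  have hf4 : (Nat.fib (n+4) : ℝ) = Nat.fib (n+2) + Nat.fib (n+3) := by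
    rw [Nat.fib_add_two]; push_cast; ring
  have hfib : ∀ m : ℕ, fibQ m =
      ⟨(Nat.fib m : ℝ), (Nat.fib (m+1) : ℝ), (Nat.fib (m+2) : ℝ), (Nat.fib (m+3) : ℝ)⟩ :=
    fun m => rfl
  have q1 : fibQ n * star (fibQ n) =
      (((Nat.fib (2*n+1) : ℝ) + (Nat.fib (2*n+5) : ℝ) : ℍ[ℝ])) := by
    ext <;>
      simp only [Quaternion.re_mul, Quaternion.imI_mul, Quaternion.imJ_mul,
        Quaternion.imK_mul, Quaternion.re_star, Quaternion.imI_star, Quaternion.imJ_star,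
        Quaternion.imK_star, Quaternion.re_coe, Quaternion.imI_coe, Quaternion.imJ_coe,
        Quaternion.imK_coe, Quaternion.re_add, Quaternion.imI_add, Quaternion.imJ_add,
        Quaternion.imK_add, h1, h2] <;>
      simp only [hfib] <;>
      ring
  have q2 : fibQ n * star (fibQ (n+1)) + fibQ (n+1) * star (fibQ n) =
      ((2 * ((Nat.fib (2*n+2) : ℝ) + (Nat.fib (2*n+6) : ℝ)) : ℍ[ℝ])) := by
    have e : ((2 * ((Nat.fib (2*n+2) : ℝ) + (Nat.fib (2*n+6) : ℝ)) : ℍ[ℝ])) =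
        (((2 * ((Nat.fib (2*n+2) : ℝ) + (Nat.fib (2*n+6) : ℝ)) : ℝ) : ℍ[ℝ])) := by
      have h2 : ((2 : ℝ) : ℍ[ℝ]) = 2 := by
        rw [show (2:ℝ) = 1 + 1 by norm_num, Quaternion.coe_add, Quaternion.coe_one]; norm_num
      push_cast [h2]; ring
    rw [e]
    ext <;>
      simp only [Quaternion.re_mul, Quaternion.imI_mul, Quaternion.imJ_mul,
        Quaternion.imK_mul, Quaternion.re_star, Quaternion.imI_star, Quaternion.imJ_star,
        Quaternion.imK_star, Quaternion.re_coe, Quaternion.imI_coe, Quaternion.imJ_coe,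
        Quaternion.imK_coe, Quaternion.re_add, Quaternion.imI_add, Quaternion.imJ_add,
        Quaternion.imK_add, h3, h4, hf4] <;>
      simp only [hfib, hf4] <;>
      ring
  rw [dQ, dQconj, dual_expand, q1, q2]
end
end

section
/- For n ≥ 0, Q̃_n · conj(Q̃_n) = 3(F_{2n+3} + 2ε F_{2n+4}) as a scalar dual number inside the dual quaternions. -/
open Quaternion TrivSqZeroExt DualNumber

noncomputable section

lemma fib23 (n : ℕ) : (Nat.fib (2*n+3) : ℝ)
    = Nat.fib (n+1) * Nat.fib (n+1) + Nat.fib (n+2) * Nat.fib (n+2) := by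
  rw [show 2*n+3 = (n+1)+(n+1)+1 by ring, Nat.fib_add]; push_cast; ring

lemma fib24 (n : ℕ) : (Nat.fib (2*n+4) : ℝ)
    = Nat.fib (n+1) * Nat.fib (n+2) + Nat.fib (n+2) * Nat.fib (n+3) := by
  rw [show 2*n+4 = (n+1)+(n+2)+1 by ring, Nat.fib_add]; push_cast; ring

lemma fib2' (n : ℕ) : (Nat.fib (n+2) : ℝ) = Nat.fib n + Nat.fib (n+1) := by
  rw [Nat.fib_add_two]; push_cast; ring

lemma q1 (n : ℕ) : fibQ n * star (fibQ n) = (((3 * Nat.fib (2*n+3) : ℝ)) : ℍ[ℝ]) := by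
  ext <;> simp only [Quaternion.re_mul, Quaternion.imI_mul, Quaternion.imJ_mul, Quaternion.imK_mul, Quaternion.re_star, Quaternion.imI_star, Quaternion.imJ_star, Quaternion.imK_star] <;> simp [fibQ, fib23, show n+3=(n+1)+2 from rfl, fib2'] <;> ring

lemma q2 (n : ℕ) : fibQ n * star (fibQ (n+1)) + fibQ (n+1) * star (fibQ n)
    = (((6 * Nat.fib (2*n+4) : ℝ)) : ℍ[ℝ]) := by
  ext <;> simp only [Quaternion.re_add, Quaternion.imI_add, Quaternion.imJ_add, Quaternion.imK_add, Quaternion.re_mul, Quaternion.imI_mul, Quaternion.imJ_mul, Quaternion.imK_mul, Quaternion.re_star, Quaternion.imI_star, Quaternion.imJ_star, Quaternion.imK_star] <;> simp [fibQ, fib24, show n+4=(n+2)+2 from rfl, show n+3=(n+1)+2 from rfl, fib2'] <;> ring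

lemma two_re : (2:ℍ[ℝ]).re = 2 := by
  rw [show (2:ℍ[ℝ]) = ((2:ℕ):ℍ[ℝ]) by norm_num, Quaternion.re_natCast]; norm_num
lemma two_imI : (2:ℍ[ℝ]).imI = 0 := by
  rw [show (2:ℍ[ℝ]) = ((2:ℕ):ℍ[ℝ]) by norm_num, Quaternion.imI_natCast]
lemma two_imJ : (2:ℍ[ℝ]).imJ = 0 := by
  rw [show (2:ℍ[ℝ]) = ((2:ℕ):ℍ[ℝ]) by norm_num, Quaternion.imJ_natCast]
lemma two_imK : (2:ℍ[ℝ]).imK = 0 := by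
  rw [show (2:ℍ[ℝ]) = ((2:ℕ):ℍ[ℝ]) by norm_num, Quaternion.imK_natCast]

theorem dual_fib_quaternion_norm_eq (n : ℕ) :
    dQ n * dQconj n =
      (3 : ℝ) • (inl ((Nat.fib (2*n+3) : ℝ) : ℍ[ℝ]) +
        inl ((2 * (Nat.fib (2*n+4) : ℝ) : ℍ[ℝ])) * ε) := by
  have h1 := q1 n
  have h2 := q2 n
  refine TrivSqZeroExt.ext ?_ ?_ <;>
    simp [dQ, dQconj, mul_add, add_mul, h1, h2,
      Quaternion.coe_mul, Quaternion.smul_coe, smul_smul] <;>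
    push_cast <;> ring_nf
  rw [show 1+n = n+1 by ring, show 4+n*2 = 2*n+4 by ring, add_comm]
  rw [h2, Algebra.smul_def, Quaternion.algebraMap_def]
  ext <;> simp [two_re, two_imI, two_imJ, two_imK] <;> push_cast <;> ring
end
end

section
/- For n ≥ 0, Q̃_n² = 2 F̃_n Q̃_n − 3(F_{2n+3} + 2ε F_{2n+4}), where F̃_n = F_n + ε F_{n+1} is a scalar dual number. -/
open Quaternion TrivSqZeroExt DualNumber

noncomputable section

set_option maxHeartbeats 1000000 in
theorem dual_fib_sq (n : ℕ) :
    dQ n ^ 2 = 2 * dF n * dQ n -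
      (3 : ℝ) • (inl ((Nat.fib (2*n+3) : ℝ) : ℍ[ℝ]) +
        inl ((2 * (Nat.fib (2*n+4) : ℝ) : ℍ[ℝ])) * ε) := by
  have h3 : Nat.fib (2*n+3) = Nat.fib (n+1) * Nat.fib (n+1) + Nat.fib (n+2) * Nat.fib (n+2) := by
    rw [show 2*n+3 = (n+1)+(n+1)+1 by ring, Nat.fib_add, show n+1+1 = n+2 by ring]
  have h4 : Nat.fib (2*n+4) = Nat.fib (n+1) * Nat.fib (n+2) + Nat.fib (n+2) * Nat.fib (n+3) := by
    rw [show 2*n+4 = (n+1)+(n+2)+1 by ring, Nat.fib_add, show n+1+1 = n+2 by ring,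
      show n+2+1 = n+3 by ring]
  have r4 : Nat.fib (n+4) = Nat.fib (n+2) + Nat.fib (n+3) := Nat.fib_add_two
  have r3 : Nat.fib (n+3) = Nat.fib (n+1) + Nat.fib (n+2) := Nat.fib_add_two
  have r2 : Nat.fib (n+2) = Nat.fib n + Nat.fib (n+1) := Nat.fib_add_two
  have e2 : (2 : DualNumber ℍ[ℝ]) = inl (2:ℍ[ℝ]) := rfl
  have fr : ∀ m, (fibQ m).re = Nat.fib m := fun _ => rfl
  have fi : ∀ m, (fibQ m).imI = Nat.fib (m+1) := fun _ => rfl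
  have fj : ∀ m, (fibQ m).imJ = Nat.fib (m+2) := fun _ => rfl
  have fk : ∀ m, (fibQ m).imK = Nat.fib (m+3) := fun _ => rfl
  rw [e2]
  ext <;>
    simp only [dQ, dF, pow_two, fst_sub, fst_add, fst_mul, fst_inl, fst_eps, snd_inl, snd_eps,
      fst_smul, snd_sub, snd_add, TrivSqZeroExt.snd_mul, snd_smul, mul_zero, zero_mul, add_zero,
      zero_add, smul_zero, zero_smul, h3, h4, r4, r3, r2] <;>
    simp [Quaternion.re_mul, Quaternion.imI_mul, Quaternion.imJ_mul, Quaternion.imK_mul,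
      Quaternion.coe_mul_eq_smul, MulOpposite.smul_eq_mul_unop, Quaternion.re_smul,
      Quaternion.imI_smul, Quaternion.imJ_smul, Quaternion.imK_smul,
      show (2:ℍ[ℝ]).re = 2 from rfl, show (2:ℍ[ℝ]).imI = 0 from rfl,
      show (2:ℍ[ℝ]).imJ = 0 from rfl, show (2:ℍ[ℝ]).imK = 0 from rfl, fr, fi, fj, fk, r4, r3, r2] <;>
    ring
end
end

section
/- For n ≥ 1, Q̃_n² + Q̃_{n−1}² = 2 Q̃_{2n−1} − 3 L̃_{2n+2} + ε(2 Q_{2n} − 3 L_{2n+3}), where L̃_m = L_m + ε L_{m+1} is a scalar dual number. -/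
open Quaternion TrivSqZeroExt DualNumber

noncomputable section

lemma fib_cast_step (n : ℕ) : ((Nat.fib (n+2) : ℝ)) = Nat.fib n + Nat.fib (n+1) := by
  rw [Nat.fib_add_two]; push_cast; ring

lemma lucas_cast (n : ℕ) : ((lucas n : ℝ)) = 2 * (Nat.fib (n+1) : ℝ) - Nat.fib n := by
  induction n using Nat.twoStepInduction with
  | zero => simp [lucas]
  | one => norm_num [lucas]
  | more n ih1 ih2 =>
    show ((lucas n + lucas (n+1) : ℕ) : ℝ) = _
    push_cast
    rw [ih1, ih2]
    have h1 := fib_cast_step n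
    have h2 := fib_cast_step (n+1)
    rw [show n+1+2 = n+2+1 from rfl] at h2
    rw [h2, h1]
    ring

lemma fib_two_mul_add_one_cast (m : ℕ) :
    ((Nat.fib (2*m+1) : ℝ)) = (Nat.fib m : ℝ)^2 + (Nat.fib (m+1) : ℝ)^2 := by
  have h := Nat.fib_add m m
  rw [show m + m + 1 = 2*m+1 from by ring] at h
  have := congrArg (Nat.cast : ℕ → ℝ) h
  push_cast at this; rw [this]; ring

lemma fib_two_mul_cast (m : ℕ) :
    ((Nat.fib (2*m) : ℝ)) = 2 * Nat.fib m * Nat.fib (m+1) - (Nat.fib m : ℝ)^2 := by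
  have h3 := Nat.fib_add m (m+1)
  rw [show m + (m+1) + 1 = (2*m)+2 from by ring] at h3
  have h3r := congrArg (Nat.cast : ℕ → ℝ) h3
  push_cast at h3r
  rw [fib_cast_step (2*m)] at h3r
  rw [fib_cast_step m] at h3r
  have h1 := fib_two_mul_add_one_cast m
  nlinarith [h3r, h1]

lemma fst_two' : TrivSqZeroExt.fst (2 : DualNumber ℍ[ℝ]) = 2 := rfl
lemma fst_three' : TrivSqZeroExt.fst (3 : DualNumber ℍ[ℝ]) = 3 := rfl
lemma snd_two' : TrivSqZeroExt.snd (2 : DualNumber ℍ[ℝ]) = 0 := rfl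
lemma snd_three' : TrivSqZeroExt.snd (3 : DualNumber ℍ[ℝ]) = 0 := rfl
lemma re_two' : (2 : ℍ[ℝ]).re = 2 := rfl
lemma re_three' : (3 : ℍ[ℝ]).re = 3 := rfl
lemma imI_two' : (2 : ℍ[ℝ]).imI = 0 := rfl
lemma imI_three' : (3 : ℍ[ℝ]).imI = 0 := rfl
lemma imJ_two' : (2 : ℍ[ℝ]).imJ = 0 := rfl
lemma imJ_three' : (3 : ℍ[ℝ]).imJ = 0 := rfl
lemma imK_two' : (2 : ℍ[ℝ]).imK = 0 := rfl
lemma imK_three' : (3 : ℍ[ℝ]).imK = 0 := rfl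

theorem dual_fib_sq_sum (n : ℕ) (hn : 1 ≤ n) :
    dQ n ^ 2 + dQ (n-1) ^ 2 =
      2 * dQ (2*n-1) - 3 * dL (2*n+2) +
        inl (2 * fibQ (2*n) - ((3 * (lucas (2*n+3) : ℝ)) : ℍ[ℝ])) * ε := by
  obtain ⟨m, rfl⟩ : ∃ m, n = m + 1 := ⟨n-1, by omega⟩
  rw [show m + 1 - 1 = m from rfl, show 2*(m+1) - 1 = 2*m+1 from by omega,
    show 2*(m+1) = 2*m+2 from by ring]
  unfold dQ dL
  refine TrivSqZeroExt.ext ?_ ?_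
  · simp only [pow_two, mul_add, add_mul, fst_add, fst_mul, fst_inl, fst_sub, fst_two', fst_three',
      DualNumber.fst_eps, snd_add, TrivSqZeroExt.snd_mul, snd_inl, snd_sub, mul_zero, zero_mul, add_zero,
      zero_add, smul_zero, mul_one, sub_zero]
    apply Quaternion.ext <;>
      simp only [Quaternion.re_add, Quaternion.imI_add, Quaternion.imJ_add, Quaternion.imK_add, Quaternion.re_sub, Quaternion.imI_sub, Quaternion.imJ_sub, Quaternion.imK_sub, Quaternion.re_mul, Quaternion.imI_mul, Quaternion.imJ_mul, Quaternion.imK_mul] <;>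
      simp [fibQ, fst_two', fst_three', re_two', re_three', imI_two', imI_three', imJ_two', imJ_three', imK_two', imK_three'] <;>
      (simp only [lucas_cast, fib_cast_step, fib_two_mul_cast, fib_two_mul_add_one_cast]; ring)
  · simp only [pow_two, mul_add, add_mul, fst_add, fst_mul, fst_inl, fst_sub, fst_two', fst_three',
      snd_two', snd_three', DualNumber.fst_eps, DualNumber.snd_eps, snd_add, TrivSqZeroExt.snd_mul, snd_inl, snd_sub,
      mul_zero, zero_mul, add_zero, zero_add, smul_zero, zero_smul, smul_eq_mul,
      MulOpposite.smul_eq_mul_unop, MulOpposite.unop_op, mul_one, sub_zero]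
    apply Quaternion.ext <;>
      simp only [Quaternion.re_add, Quaternion.imI_add, Quaternion.imJ_add, Quaternion.imK_add, Quaternion.re_sub, Quaternion.imI_sub, Quaternion.imJ_sub, Quaternion.imK_sub, Quaternion.re_mul, Quaternion.imI_mul, Quaternion.imJ_mul, Quaternion.imK_mul] <;>
      simp [fibQ, fst_two', fst_three', re_two', re_three', imI_two', imI_three', imJ_two', imJ_three', imK_two', imK_three'] <;>
      (simp only [lucas_cast, fib_cast_step, fib_two_mul_cast, fib_two_mul_add_one_cast]; ring)
end
end

section
/- For Fibonacci quaternions and n ≥ 1, Q_n² + Q_{n−1}² = 2 Q_{2n−1} − 3 L_{2n+2}, where L_{2n+2} is regarded as a real scalar. -/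
open Quaternion TrivSqZeroExt DualNumber

noncomputable section

theorem lucas_eq (k : ℕ) : lucas (k+1) = Nat.fib k + Nat.fib (k+2) := by
  induction k using Nat.strong_induction_on with
  | _ k ih =>
    match k with
    | 0 => rfl
    | 1 => rfl
    | (m+2) =>
      show lucas (m+1) + lucas (m+2) = _
      rw [ih m (by omega), ih (m+1) (by omega)]
      simp [Nat.fib_add_two]
      ring

theorem qre_mul' (x y : QuaternionAlgebra ℝ (-1) 0 (-1)) :
    (@HMul.hMul ℍ[ℝ] ℍ[ℝ] ℍ[ℝ] _ x y).re = x.re * y.re - x.imI * y.imI - x.imJ * y.imJ - x.imK * y.imK :=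
  Quaternion.re_mul x y
theorem qimI_mul' (x y : QuaternionAlgebra ℝ (-1) 0 (-1)) :
    (@HMul.hMul ℍ[ℝ] ℍ[ℝ] ℍ[ℝ] _ x y).imI = x.re * y.imI + x.imI * y.re + x.imJ * y.imK - x.imK * y.imJ :=
  Quaternion.imI_mul x y
theorem qimJ_mul' (x y : QuaternionAlgebra ℝ (-1) 0 (-1)) :
    (@HMul.hMul ℍ[ℝ] ℍ[ℝ] ℍ[ℝ] _ x y).imJ = x.re * y.imJ - x.imI * y.imK + x.imJ * y.re + x.imK * y.imI :=
  Quaternion.imJ_mul x y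
theorem qimK_mul' (x y : QuaternionAlgebra ℝ (-1) 0 (-1)) :
    (@HMul.hMul ℍ[ℝ] ℍ[ℝ] ℍ[ℝ] _ x y).imK = x.re * y.imK + x.imI * y.imJ - x.imJ * y.imI + x.imK * y.re :=
  Quaternion.imK_mul x y

theorem qre_mul'' (x : ℍ[ℝ]) (y : QuaternionAlgebra ℝ (-1) 0 (-1)) :
    (@HMul.hMul ℍ[ℝ] ℍ[ℝ] ℍ[ℝ] _ x y).re = x.re * y.re - x.imI * y.imI - x.imJ * y.imJ - x.imK * y.imK :=
  Quaternion.re_mul x y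
theorem qimI_mul'' (x : ℍ[ℝ]) (y : QuaternionAlgebra ℝ (-1) 0 (-1)) :
    (@HMul.hMul ℍ[ℝ] ℍ[ℝ] ℍ[ℝ] _ x y).imI = x.re * y.imI + x.imI * y.re + x.imJ * y.imK - x.imK * y.imJ :=
  Quaternion.imI_mul x y
theorem qimJ_mul'' (x : ℍ[ℝ]) (y : QuaternionAlgebra ℝ (-1) 0 (-1)) :
    (@HMul.hMul ℍ[ℝ] ℍ[ℝ] ℍ[ℝ] _ x y).imJ = x.re * y.imJ - x.imI * y.imK + x.imJ * y.re + x.imK * y.imI :=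
  Quaternion.imJ_mul x y
theorem qimK_mul'' (x : ℍ[ℝ]) (y : QuaternionAlgebra ℝ (-1) 0 (-1)) :
    (@HMul.hMul ℍ[ℝ] ℍ[ℝ] ℍ[ℝ] _ x y).imK = x.re * y.imK + x.imI * y.imJ - x.imJ * y.imI + x.imK * y.re :=
  Quaternion.imK_mul x y

theorem fib_quaternion_sq_sum (n : ℕ) (hn : 1 ≤ n) :
    fibQ n ^ 2 + fibQ (n-1) ^ 2 =
      2 * fibQ (2*n-1) - ((3 * (lucas (2*n+2) : ℝ)) : ℍ[ℝ]) := by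
  obtain ⟨m, rfl⟩ : ∃ m, n = m + 1 := ⟨n-1, by omega⟩
  have e1 : m + 1 - 1 = m := rfl
  have e2 : 2*(m+1) - 1 = 2*m+1 := by omega
  have e3 : 2*(m+1) + 2 = 2*m+4 := by omega
  rw [e1, e2, e3]
  set a := Nat.fib m with ha
  set b := Nat.fib (m+1) with hb
  have f2 : Nat.fib (m+2) = a + b := Nat.fib_add_two
  have f3 : Nat.fib (m+3) = a + 2*b := by rw [show m+3 = (m+1)+2 from rfl, Nat.fib_add_two, f2]; ring
  have f4 : Nat.fib (m+4) = 2*a + 3*b := by rw [show m+4 = (m+2)+2 from rfl, Nat.fib_add_two, f2, f3]; ring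
  have g1 : Nat.fib (2*m+1) = a*a + b*b := by
    have := Nat.fib_add m m; rw [show m+m+1 = 2*m+1 by omega] at this; rw [this]
  have g2 : Nat.fib (2*m+2) = a*b + b*(a+b) := by
    have := Nat.fib_add m (m+1); rw [show m+(m+1)+1 = 2*m+2 by omega] at this; rw [this, f2]
  have g3 : Nat.fib (2*m+3) = b*b + (a+b)*(a+b) := by
    have := Nat.fib_add (m+1) (m+1); rw [show (m+1)+(m+1)+1 = 2*m+3 by omega] at this; rw [this, f2]
  have g4 : Nat.fib (2*m+4) = b*(a+b) + (a+b)*(a+2*b) := by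
    have := Nat.fib_add (m+1) (m+2); rw [show (m+1)+(m+2)+1 = 2*m+4 by omega] at this; rw [this, f2, f3]
  have g5 : Nat.fib (2*m+5) = (a+b)*(a+b) + (a+2*b)*(a+2*b) := by
    have := Nat.fib_add (m+2) (m+2); rw [show (m+2)+(m+2)+1 = 2*m+5 by omega] at this; rw [this, f2, f3]
  have gl : lucas (2*m+4) = (b*b + (a+b)*(a+b)) + ((a+b)*(a+b) + (a+2*b)*(a+2*b)) := by
    rw [show 2*m+4 = (2*m+3)+1 from rfl, lucas_eq, g3, show 2*m+3+2 = 2*m+5 from rfl, g5]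
  unfold fibQ
  rw [show m+1+1 = m+2 from rfl, show m+1+2 = m+3 from rfl, show m+1+3 = m+4 from rfl,
      show m+2+1 = m+3 from rfl, show 2*m+1+1 = 2*m+2 from rfl, show 2*m+1+2 = 2*m+3 from rfl,
      show 2*m+1+3 = 2*m+4 from rfl,
      f2, f3, f4, g1, g2, g3, g4, gl]
  have two_eq : (2:ℍ[ℝ]) = ((2:ℝ):ℍ[ℝ]) := by norm_cast
  rw [two_eq]
  simp only [show (3:ℍ[ℝ]) = ((3:ℝ):ℍ[ℝ]) by norm_cast]
  erw [pow_two, pow_two]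
  ext <;>
    simp only [pow_two, Quaternion.re_add, Quaternion.imI_add, Quaternion.imJ_add,
      Quaternion.imK_add, Quaternion.re_sub, Quaternion.imI_sub, Quaternion.imJ_sub,
      Quaternion.imK_sub, Quaternion.re_mul, Quaternion.imI_mul, Quaternion.imJ_mul,
      Quaternion.imK_mul, Quaternion.re_coe, Quaternion.imI_coe, Quaternion.imJ_coe,
      Quaternion.imK_coe, qre_mul', qimI_mul', qimJ_mul', qimK_mul', qre_mul'', qimI_mul'', qimJ_mul'', qimK_mul''] <;>
    push_cast <;> ring
end
end

section
/- For n ≥ 1, the sum of odd-indexed dual Fibonacci quaternions satisfies Σ_{s=1}^{n} Q̃_{2s−1} = Q̃_{2n} − Q̃_0. -/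
open Quaternion TrivSqZeroExt DualNumber

noncomputable section

lemma fibQ_add (n : ℕ) : fibQ n + fibQ (n+1) = fibQ (n+2) := by
  simp only [fibQ]
  ext <;> show (_ : ℝ) + _ = _ <;> simp [Quaternion.ext_iff, Nat.fib_add_two]

lemma dQ_add (n : ℕ) : dQ n + dQ (n+1) = dQ (n+2) := by
  simp only [dQ, ← fibQ_add n, ← fibQ_add (n+1), TrivSqZeroExt.inl_add, add_mul]
  abel

theorem dual_fib_sum_odd (n : ℕ) (hn : 1 ≤ n) :
    ∑ s ∈ Finset.Icc 1 n, dQ (2*s-1) = dQ (2*n) - dQ 0 := by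
  induction n with
  | zero => omega
  | succ m ih =>
    rcases Nat.eq_zero_or_pos m with rfl | hm
    · simp only [Finset.Icc_self, Finset.sum_singleton]
      rw [eq_sub_iff_add_eq, add_comm]
      exact dQ_add 0
    · rw [Finset.sum_Icc_succ_top (by omega), ih hm]
      have h1 : 2*(m+1)-1 = 2*m+1 := by omega
      have h2 : 2*(m+1) = 2*m+2 := by omega
      rw [h1, h2, ← dQ_add (2*m)]
      abel
end
end

section
/- Binet formula for dual Fibonacci quaternions: for all n ≥ 0, Q̃_n = (α* αⁿ − β* βⁿ)/(α − β), where α = (1+√5)/2, β = (1−√5)/2, α̲ = 1 + iα + jα² + kα³, β̲ = 1 + iβ + jβ² + kβ³, α* = α̲(1 + εα), β* = β̲(1 + εβ). -/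
open Quaternion TrivSqZeroExt DualNumber

noncomputable section

open Real goldenRatio in
private lemma fib_comp' (m : ℕ) : (Nat.fib m : ℝ) = (√5)⁻¹ * (φ^m - ψ^m) := by
  rw [Real.coe_fib_eq]; ring

open Real goldenRatio in
private lemma quatBinet' (m : ℕ) :
    (⟨Nat.fib m, Nat.fib (m+1), Nat.fib (m+2), Nat.fib (m+3)⟩ : ℍ[ℝ]) =
      (√5)⁻¹ • ((φ^m) • (⟨1, φ, φ^2, φ^3⟩ : ℍ[ℝ]) - (ψ^m) • (⟨1, ψ, ψ^2, ψ^3⟩ : ℍ[ℝ])) := by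
  ext <;>
    simp only [QuaternionAlgebra.re_smul, QuaternionAlgebra.imI_smul, QuaternionAlgebra.imJ_smul,
      QuaternionAlgebra.imK_smul, QuaternionAlgebra.re_sub, QuaternionAlgebra.imI_sub,
      QuaternionAlgebra.imJ_sub, QuaternionAlgebra.imK_sub, smul_eq_mul, mul_one,
      fib_comp', pow_add, pow_one]

theorem dual_fib_binet (n : ℕ) :
    dQ n =
      ((1 + Real.sqrt 5)/2 - (1 - Real.sqrt 5)/2)⁻¹ •
        ((((1 + Real.sqrt 5)/2) ^ n) •
            ((inl (⟨1, (1 + Real.sqrt 5)/2, ((1 + Real.sqrt 5)/2)^2, ((1 + Real.sqrt 5)/2)^3⟩ : ℍ[ℝ]) : DualNumber ℍ[ℝ]) *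
              (1 + ((1 + Real.sqrt 5)/2) • (ε : DualNumber ℍ[ℝ]))) -
          (((1 - Real.sqrt 5)/2) ^ n) •
            ((inl (⟨1, (1 - Real.sqrt 5)/2, ((1 - Real.sqrt 5)/2)^2, ((1 - Real.sqrt 5)/2)^3⟩ : ℍ[ℝ]) : DualNumber ℍ[ℝ]) *
              (1 + ((1 - Real.sqrt 5)/2) • (ε : DualNumber ℍ[ℝ])))) := by
  have hgold : (1 + Real.sqrt 5)/2 - (1 - Real.sqrt 5)/2 = Real.sqrt 5 := by ring
  rw [hgold]
  show (inl (fibQ n) + inl (fibQ (n+1)) * ε : DualNumber ℍ[ℝ]) = _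
  refine TrivSqZeroExt.ext ?_ ?_
  · simp only [fst_add, fst_inl, fst_mul, fst_smul, fst_sub, fst_one, DualNumber.fst_eps,
      mul_zero, add_zero, mul_one, smul_zero]
    exact quatBinet' n
  · simp only [snd_add, snd_inl, TrivSqZeroExt.snd_mul, snd_smul, snd_sub, snd_one,
      DualNumber.snd_eps, fst_one, fst_inl, DualNumber.fst_eps, smul_zero, add_zero, zero_add,
      smul_eq_mul, mul_one, fst_add, fst_smul, mul_smul_comm, smul_smul, ← pow_succ]
    erw [fst_inl, snd_inl, smul_zero, add_zero, add_zero]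
    have h := quatBinet' (n+1)
    rw [pow_succ Real.goldenRatio n, pow_succ Real.goldenConj n, mul_smul, mul_smul] at h
    exact h
end
end

section
/- Binet formula for dual Lucas quaternions: for all n ≥ 0, K̃_n = α* αⁿ + β* βⁿ, where α = (1+√5)/2, β = (1−√5)/2, α* = (1 + iα + jα² + kα³)(1 + εα), β* = (1 + iβ + jβ² + kβ³)(1 + εβ). -/
open Quaternion TrivSqZeroExt DualNumber

noncomputable section

lemma binet_lucas (n : ℕ) :
    (lucas n : ℝ) = ((1 + Real.sqrt 5)/2)^n + ((1 - Real.sqrt 5)/2)^n := by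
  have h5 : Real.sqrt 5 ^ 2 = 5 := Real.sq_sqrt (by norm_num)
  induction n using Nat.twoStepInduction with
  | zero => norm_num [lucas]
  | one => simp [lucas]
  | more n ih1 ih2 =>
    have : (lucas (n+2) : ℝ) = (lucas n : ℝ) + (lucas (n+1) : ℝ) := by
      simp [lucas]
    rw [this, ih1, ih2]
    ring_nf
    rw [h5]; ring

lemma lucasQ_eq (n : ℕ) :
    lucasQ n = (((1 + Real.sqrt 5)/2)^n) •
        (⟨1, (1 + Real.sqrt 5)/2, ((1 + Real.sqrt 5)/2)^2, ((1 + Real.sqrt 5)/2)^3⟩ : ℍ[ℝ]) +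
      (((1 - Real.sqrt 5)/2)^n) •
        (⟨1, (1 - Real.sqrt 5)/2, ((1 - Real.sqrt 5)/2)^2, ((1 - Real.sqrt 5)/2)^3⟩ : ℍ[ℝ]) := by
  ext <;> simp [lucasQ, binet_lucas, -Real.goldenRatio_sq, -Real.goldenConj_sq] <;> ring

def mkQ (a b c d : ℝ) : ℍ[ℝ] := ⟨a, b, c, d⟩

lemma mkQ_eq (a b c d : ℝ) : (⟨a, b, c, d⟩ : ℍ[ℝ]) = mkQ a b c d := rfl

@[simp] lemma mkQ_re (a b c d : ℝ) : (mkQ a b c d).re = a := rfl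
@[simp] lemma mkQ_imI (a b c d : ℝ) : (mkQ a b c d).imI = b := rfl
@[simp] lemma mkQ_imJ (a b c d : ℝ) : (mkQ a b c d).imJ = c := rfl
@[simp] lemma mkQ_imK (a b c d : ℝ) : (mkQ a b c d).imK = d := rfl

lemma lucasQ_eq' (n : ℕ) :
    lucasQ n = (((1 + Real.sqrt 5)/2)^n) •
        mkQ 1 ((1 + Real.sqrt 5)/2) (((1 + Real.sqrt 5)/2)^2) (((1 + Real.sqrt 5)/2)^3) +
      (((1 - Real.sqrt 5)/2)^n) •
        mkQ 1 ((1 - Real.sqrt 5)/2) (((1 - Real.sqrt 5)/2)^2) (((1 - Real.sqrt 5)/2)^3) :=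
  lucasQ_eq n

theorem dual_lucas_binet (n : ℕ) :
    dK n =
      (((1 + Real.sqrt 5)/2) ^ n) •
          ((inl (⟨1, (1 + Real.sqrt 5)/2, ((1 + Real.sqrt 5)/2)^2, ((1 + Real.sqrt 5)/2)^3⟩ : ℍ[ℝ]) : DualNumber ℍ[ℝ]) *
            (1 + ((1 + Real.sqrt 5)/2) • (ε : DualNumber ℍ[ℝ]))) +
        (((1 - Real.sqrt 5)/2) ^ n) •
          ((inl (⟨1, (1 - Real.sqrt 5)/2, ((1 - Real.sqrt 5)/2)^2, ((1 - Real.sqrt 5)/2)^3⟩ : ℍ[ℝ]) : DualNumber ℍ[ℝ]) *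
            (1 + ((1 - Real.sqrt 5)/2) • (ε : DualNumber ℍ[ℝ]))) := by
  simp only [mkQ_eq]
  apply TrivSqZeroExt.ext
  · simp [dK, lucasQ_eq' n, -Real.goldenRatio_sq, -Real.goldenConj_sq]
  · simp [dK, lucasQ_eq' (n+1), pow_succ, -Real.goldenRatio_sq, -Real.goldenConj_sq]
    ext <;> simp [-Real.goldenRatio_sq, -Real.goldenConj_sq] <;> ring
end
end

section
/- For Fibonacci quaternions and n ≥ 1, Q_{n−1} Q_{n+2} − Q_n Q_{n+1} = (−1)ⁿ (2 + 4i + 6j + k). -/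
open Quaternion TrivSqZeroExt DualNumber

noncomputable section

lemma cassini (m : ℕ) :
    (Nat.fib m : ℝ) * Nat.fib (m+2) - (Nat.fib (m+1) : ℝ)^2 = (-1)^(m+1) := by
  induction m with
  | zero => simp
  | succ k ih =>
    have h2 : (Nat.fib (k+3) : ℝ) = Nat.fib (k+1) + Nat.fib (k+2) := by
      rw [show k+3 = (k+1)+2 from rfl, Nat.fib_add_two]; push_cast; ring
    have h1 : (Nat.fib (k+2) : ℝ) = Nat.fib k + Nat.fib (k+1) := by
      rw [Nat.fib_add_two]; push_cast; ring
    rw [h2]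
    rw [h1] at ih ⊢
    ring_nf
    ring_nf at ih
    nlinarith [ih]

theorem fib_quaternion_docagne (n : ℕ) (hn : 1 ≤ n) :
    fibQ (n-1) * fibQ (n+2) - fibQ n * fibQ (n+1) =
      ((-1 : ℝ) ^ n) • (2 + 4 * qi + 6 * qj + qk) := by
  obtain ⟨m, rfl⟩ : ∃ m, n = m+1 := ⟨n-1, by omega⟩
  have key := cassini m
  set a : ℝ := (Nat.fib m : ℝ) with ha
  set b : ℝ := ((Nat.fib (m+1) : ℕ) : ℝ) with hb
  have e2 : (Nat.fib (m+2) : ℝ) = a + b := by rw [Nat.fib_add_two]; push_cast; ring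
  have e3 : (Nat.fib (m+3) : ℝ) = a + 2*b := by
    rw [show m+3 = (m+1)+2 from rfl, Nat.fib_add_two]; push_cast; rw [e2]; ring
  have e4 : (Nat.fib (m+4) : ℝ) = 2*a + 3*b := by
    rw [show m+4 = (m+2)+2 from rfl, Nat.fib_add_two]; push_cast; rw [e2, e3]; ring
  have e5 : (Nat.fib (m+5) : ℝ) = 3*a + 5*b := by
    rw [show m+5 = (m+3)+2 from rfl, Nat.fib_add_two]; push_cast; rw [e3, e4]; ring
  have e6 : (Nat.fib (m+6) : ℝ) = 5*a + 8*b := by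
    rw [show m+6 = (m+4)+2 from rfl, Nat.fib_add_two]; push_cast; rw [e4, e5]; ring
  have hrhs : (2 + 4 * qi + 6 * qj + qk : ℍ[ℝ]) = ⟨2,4,6,1⟩ := by
    ext <;> simp [Quaternion.re_mul, Quaternion.imI_mul, Quaternion.imJ_mul, Quaternion.imK_mul] <;>
      simp [qi, qj, qk, show (2:ℍ[ℝ]) = 1+1 by norm_num,
      show (4:ℍ[ℝ]) = 1+1+1+1 by norm_num, show (6:ℍ[ℝ]) = 1+1+1+1+1+1 by norm_num] <;> norm_num
  have hc : ((-1:ℝ))^(m+1) = a*(a+b) - b^2 := by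
    rw [e2] at key; rw [← key]
  simp only [Nat.add_sub_cancel, hrhs]
  show _ = (⟨(-1:ℝ)^(m+1)*2, (-1:ℝ)^(m+1)*4, (-1:ℝ)^(m+1)*6, (-1:ℝ)^(m+1)*1⟩ : ℍ[ℝ])
  ext <;>
    simp [Quaternion.re_mul, Quaternion.imI_mul, Quaternion.imJ_mul,
      Quaternion.imK_mul, Quaternion.re_smul, Quaternion.imI_smul, Quaternion.imJ_smul,
      Quaternion.imK_smul] <;>
    simp [fibQ, qi, qj, qk, QuaternionAlgebra.re_smul, QuaternionAlgebra.imI_smul, QuaternionAlgebra.imJ_smul,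
      QuaternionAlgebra.imK_smul, show m+1+1 = m+2 from rfl, show m+1+2 = m+3 from rfl,
      show m+1+3 = m+4 from rfl, show m+2+1 = m+3 from rfl, show m+2+2 = m+4 from rfl,
      show m+2+3 = m+5 from rfl, show m+3+3 = m+6 from rfl, e2, e3, e4, e5, e6, hc, ← ha, ← hb] <;> ring
end
end

section
/- For Fibonacci quaternions and n ≥ 1, the Cassini identity Q_{n−1} Q_{n+1} − Q_n² = (−1)ⁿ (2 Q_1 − 3k) holds. -/
open Quaternion TrivSqZeroExt DualNumber

noncomputable section

lemma fibQ_add_two (m : ℕ) : fibQ (m+2) = fibQ m + fibQ (m+1) := by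
  apply QuaternionAlgebra.ext <;> simp [fibQ, Nat.fib_add_two] <;> rfl

lemma cassini_aux (m : ℕ) :
    fibQ m * fibQ (m+2) - fibQ (m+1) ^ 2 =
      ((-1 : ℝ) ^ (m+1)) • (2 * fibQ 1 - 3 * qk) := by
  induction m with
  | zero =>
    have h2 : (2 : ℍ[ℝ]) = ((2 : ℝ) : ℍ[ℝ]) := by norm_cast
    have h3 : (3 : ℍ[ℝ]) = ((3 : ℝ) : ℍ[ℝ]) := by norm_cast
    rw [h2, h3]
    apply QuaternionAlgebra.ext <;>
      simp [Quaternion.re_mul, Quaternion.imI_mul, Quaternion.imJ_mul,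
        Quaternion.imK_mul, pow_two] <;> simp [fibQ, qk, Nat.fib] <;> norm_num
  | succ m ih =>
    have h3 : fibQ (m+3) = fibQ (m+1) + fibQ (m+2) := fibQ_add_two (m+1)
    have h2 : fibQ (m+2) = fibQ m + fibQ (m+1) := fibQ_add_two m
    have h : fibQ (m+1) * fibQ (m+3) - fibQ (m+2) ^ 2
        = -(fibQ m * fibQ (m+2) - fibQ (m+1) ^ 2) := by
      rw [h3, h2]; noncomm_ring
    rw [show m+1+2 = m+3 from rfl, h, ih, show m+1+1 = m+2 from rfl,
      show ((-1:ℝ))^(m+2) = (-1)^(m+1) * -1 from pow_succ _ _]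
    simp only [mul_smul, neg_smul, one_smul, smul_neg]

theorem fib_quaternion_cassini (n : ℕ) (hn : 1 ≤ n) :
    fibQ (n-1) * fibQ (n+1) - fibQ n ^ 2 =
      ((-1 : ℝ) ^ n) • (2 * fibQ 1 - 3 * qk) := by
  obtain ⟨m, rfl⟩ := Nat.exists_eq_add_of_le hn
  rw [Nat.add_comm 1 m]
  simpa using cassini_aux m
end
end
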